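/- Let 0 < α < 1, T > 0 and let b, c₁ > 0 be constants. Suppose y : [0, T] → ℝ is nonnegative, absolutely continuous, and satisfies D^α y(t) + c₁ y(t) ≤ b for almost every t ∈ [0, T]. Then for every t ∈ [0, T], y(t) ≤ y(0) + b T^α / (α Γ(α)). -/

import Mathlib

open MeasureTheory

/-- The (left) Caputo fractional derivative of order `α` of `u : ℝ → ℝ`:
`D^α u (t) = (1/Γ(1-α)) ∫₀ᵗ (t-s)^(-α) u'(s) ds`. -/
noncomputable def caputoDeriv (α : ℝ) (u : ℝ → ℝ) (t : ℝ) : ℝ :=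
  (1 / Real.Gamma (1 - α)) * ∫ s in Set.Ioo 0 t, (t - s) ^ (-α) * deriv u s

/-- Absolute continuity of `f` on `[a, b]`, encoded via the fundamental theorem of calculus. -/
def AbsContOn (f : ℝ → ℝ) (a b : ℝ) : Prop :=
  ContinuousOn f (Set.Icc a b) ∧ IntegrableOn (deriv f) (Set.Ioo a b) ∧
    ∀ x ∈ Set.Icc a b, f x = f a + ∫ s in Set.Ioo a x, deriv f s

open Set


lemma beta01 {α : ℝ} (hα0 : 0 < α) (hα1 : α < 1) :
    ∫ u in (0:ℝ)..1, u ^ (-α) * (1 - u) ^ (α - 1) = Real.Gamma α * Real.Gamma (1 - α) := by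
  have h1α : (0:ℝ) < 1 - α := by linarith
  have h := Complex.Gamma_mul_Gamma_eq_betaIntegral
    (s := ((1 - α : ℝ) : ℂ)) (t := ((α : ℝ) : ℂ)) (by simpa using h1α) (by simpa using hα0)
  have hsum : ((1 - α : ℝ) : ℂ) + ((α : ℝ) : ℂ) = 1 := by push_cast; ring
  rw [hsum, Complex.Gamma_one, one_mul] at h
  have hbeta : Complex.betaIntegral ((1 - α : ℝ) : ℂ) ((α : ℝ) : ℂ)
      = ((∫ u in (0:ℝ)..1, u ^ (-α) * (1 - u) ^ (α - 1) : ℝ) : ℂ) := by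
    rw [Complex.betaIntegral, ← intervalIntegral.integral_ofReal]
    apply intervalIntegral.integral_congr
    intro x hx
    rw [uIcc_of_le (by norm_num : (0:ℝ) ≤ 1)] at hx
    have hx0 : (0:ℝ) ≤ x := hx.1
    have hx1 : (0:ℝ) ≤ 1 - x := by linarith [hx.2]
    simp only []
    rw [show ((1-α:ℝ):ℂ) - 1 = ((-α : ℝ):ℂ) by push_cast; ring,
      show ((α:ℝ):ℂ) - 1 = ((α - 1 : ℝ):ℂ) by push_cast; ring,
      show (1 - (x:ℂ)) = ((1 - x : ℝ):ℂ) by push_cast; ring,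
      ← Complex.ofReal_cpow hx0, ← Complex.ofReal_cpow hx1, ← Complex.ofReal_mul]
  rw [hbeta, Complex.Gamma_ofReal, Complex.Gamma_ofReal, ← Complex.ofReal_mul] at h
  have h2 := Complex.ofReal_injective h
  rw [← h2]; ring


lemma measurable_rpow_const (c : ℝ) : Measurable (fun x : ℝ => x ^ c) :=
  measurable_of_continuousOn_compl_singleton 0 fun x hx =>
    (Real.continuousAt_rpow_const x c (Or.inl hx)).continuousWithinAt

lemma kernel_measurable (α t a : ℝ) :
    Measurable (fun s : ℝ => (t - s) ^ (α - 1) * (s - a) ^ (-α)) :=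
  ((measurable_rpow_const (α-1)).comp (measurable_const.sub measurable_id)).mul
    ((measurable_rpow_const (-α)).comp (measurable_id.sub measurable_const))

lemma kernel_integrableOn {α : ℝ} (hα0 : 0 < α) (hα1 : α < 1) {a b : ℝ} (hab : a < b) :
    IntegrableOn (fun s => (b - s) ^ (α - 1) * (s - a) ^ (-α)) (Set.Ioo a b) := by
  set m := (a + b) / 2 with hm
  have ham : a < m := by simp only [hm]; linarith
  have hmb : m < b := by simp only [hm]; linarith
  have hmeas := kernel_measurable α b a
  have hsub : Set.Ioo a b ⊆ Set.Ioc a m ∪ Set.Ioc m b := by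
    intro s hs
    rcases le_or_gt s m with h | h
    · exact Or.inl ⟨hs.1, h⟩
    · exact Or.inr ⟨h, hs.2.le⟩
  refine IntegrableOn.mono_set (IntegrableOn.union ?_ ?_) hsub
  · have hg : IntegrableOn (fun s => (b - m) ^ (α - 1) * (s - a) ^ (-α)) (Set.Ioc a m) := by
      have h1 : IntervalIntegrable (fun x : ℝ => x ^ (-α)) volume 0 (m - a) :=
        intervalIntegral.intervalIntegrable_rpow' (by linarith)
      have h2 := h1.comp_sub_right a
      rw [intervalIntegrable_iff, zero_add, sub_add_cancel, uIoc_of_le ham.le] at h2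
      exact h2.const_mul _
    refine hg.integrable.mono' (hmeas.aestronglyMeasurable.restrict) ?_
    filter_upwards [ae_restrict_mem measurableSet_Ioc] with s hs
    have h1 : (0:ℝ) < b - s := by linarith [hs.2, hmb]
    have h2 : (0:ℝ) < s - a := by linarith [hs.1]
    rw [Real.norm_eq_abs, abs_mul, abs_of_nonneg (Real.rpow_nonneg h1.le _),
      abs_of_nonneg (Real.rpow_nonneg h2.le _)]
    exact mul_le_mul_of_nonneg_right
      (Real.rpow_le_rpow_of_nonpos (by linarith [hs.2]) (by linarith [hs.2]) (by linarith))
      (Real.rpow_nonneg h2.le _)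
  · have hg : IntegrableOn (fun s => (b - s) ^ (α - 1) * (m - a) ^ (-α)) (Set.Ioc m b) := by
      have h1 : IntervalIntegrable (fun x : ℝ => x ^ (α - 1)) volume 0 (b - m) :=
        intervalIntegral.intervalIntegrable_rpow' (by linarith)
      have h2 := h1.comp_sub_left b
      rw [sub_zero, sub_sub_cancel, intervalIntegrable_iff] at h2
      rw [uIoc_comm, uIoc_of_le hmb.le] at h2
      exact h2.mul_const _
    refine hg.integrable.mono' (hmeas.aestronglyMeasurable.restrict) ?_
    filter_upwards [ae_restrict_mem measurableSet_Ioc] with s hs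
    have h1 : (0:ℝ) ≤ b - s := by linarith [hs.2]
    have h2 : (0:ℝ) < s - a := by linarith [hs.1, ham]
    rw [Real.norm_eq_abs, abs_mul, abs_of_nonneg (Real.rpow_nonneg h1 _),
      abs_of_nonneg (Real.rpow_nonneg h2.le _)]
    exact mul_le_mul_of_nonneg_left
      (Real.rpow_le_rpow_of_nonpos (by linarith) (by linarith [hs.1]) (by linarith))
      (Real.rpow_nonneg h1 _)

lemma kernel_integral {α : ℝ} (hα0 : 0 < α) (hα1 : α < 1) {a b : ℝ} (hab : a < b) :
    ∫ s in Set.Ioo a b, (b - s) ^ (α - 1) * (s - a) ^ (-α)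
      = Real.Gamma α * Real.Gamma (1 - α) := by
  have hba : (0:ℝ) < b - a := by linarith
  have key := intervalIntegral.integral_comp_mul_add
    (a := (0:ℝ)) (b := 1) (fun s => (b - s) ^ (α - 1) * (s - a) ^ (-α)) hba.ne' a
  rw [mul_zero, zero_add, mul_one, sub_add_cancel] at key
  have lhs_eq : (∫ x in (0:ℝ)..1, (fun s => (b - s) ^ (α - 1) * (s - a) ^ (-α)) ((b - a) * x + a))
      = (b - a)⁻¹ * (Real.Gamma α * Real.Gamma (1 - α)) := by
    rw [← beta01 hα0 hα1, ← intervalIntegral.integral_const_mul]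
    apply intervalIntegral.integral_congr
    intro x hx
    rw [uIcc_of_le (by norm_num : (0:ℝ) ≤ 1)] at hx
    have hx0 : (0:ℝ) ≤ x := hx.1
    have hx1 : (0:ℝ) ≤ 1 - x := by linarith [hx.2]
    simp only []
    have e1 : b - ((b - a) * x + a) = (b - a) * (1 - x) := by ring
    have e2 : (b - a) * x + a - a = (b - a) * x := by ring
    rw [e1, e2, Real.mul_rpow hba.le hx1, Real.mul_rpow hba.le hx0]
    have : (b - a) ^ (α - 1) * (1 - x) ^ (α - 1) * ((b - a) ^ (-α) * x ^ (-α))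
        = ((b - a) ^ (α - 1) * (b - a) ^ (-α)) * (x ^ (-α) * (1 - x) ^ (α - 1)) := by ring
    rw [this, ← Real.rpow_add hba, show α - 1 + -α = -1 by ring, Real.rpow_neg_one]
  rw [lhs_eq] at key
  have : ∫ s in a..b, (b - s) ^ (α - 1) * (s - a) ^ (-α)
      = Real.Gamma α * Real.Gamma (1 - α) := by
    have hne : (b - a)⁻¹ ≠ 0 := inv_ne_zero hba.ne'
    rw [smul_eq_mul] at key
    exact (mul_left_cancel₀ hne key).symm
  rw [← this, intervalIntegral.integral_of_le hab.le, integral_Ioc_eq_integral_Ioo]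

lemma caputo_fund {α T : ℝ} (hα0 : 0 < α) (hα1 : α < 1) (hT : 0 < T)
    (y : ℝ → ℝ) (hAC : AbsContOn y 0 T) {t : ℝ} (ht0 : 0 < t) (htT : t ≤ T) :
    (∫ s in Set.Ioo 0 t, (t - s) ^ (α - 1) * caputoDeriv α y s)
      = Real.Gamma α * (y t - y 0)
    ∧ IntegrableOn (fun s => (t - s) ^ (α - 1) * caputoDeriv α y s) (Set.Ioo 0 t) := by
  have hΓ1α : (0:ℝ) < Real.Gamma (1 - α) := Real.Gamma_pos_of_pos (by linarith)
  set G : ℝ × ℝ → ℝ :=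
    fun p => (t - p.1) ^ (α - 1) * ((p.1 - p.2) ^ (-α) * deriv y p.2) with hG
  set S : Set (ℝ × ℝ) := {p | 0 < p.2} ∩ ({p | p.2 < p.1} ∩ {p | p.1 < t}) with hS
  set F : ℝ × ℝ → ℝ := S.indicator G with hF
  have hSmeas : MeasurableSet S :=
    (measurableSet_lt measurable_const measurable_snd).inter
      ((measurableSet_lt measurable_snd measurable_fst).inter
        (measurableSet_lt measurable_fst measurable_const))
  have hGmeas : Measurable G :=
    (((measurable_rpow_const (α-1)).comp (measurable_const.sub measurable_fst)).mul
      (((measurable_rpow_const (-α)).comp (measurable_fst.sub measurable_snd)).mul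
        ((measurable_deriv y).comp measurable_snd)))
  have hFmeas : Measurable F := hGmeas.indicator hSmeas
  -- slice in r (second coordinate fixed)
  have slice_r : ∀ r : ℝ, (fun s => F (s, r)) =
      if r ∈ Set.Ioo 0 t then
        (Set.Ioo r t).indicator
          (fun s => ((t - s) ^ (α - 1) * (s - r) ^ (-α)) * deriv y r)
      else 0 := by
    intro r; funext s
    rw [hF]
    by_cases hr : r ∈ Set.Ioo 0 t
    · rw [if_pos hr]
      by_cases hs : s ∈ Set.Ioo r t
      · rw [Set.indicator_of_mem hs,
          Set.indicator_of_mem (show (s, r) ∈ S from ⟨hr.1, hs.1, hs.2⟩)]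
        simp only [hG]; ring
      · rw [Set.indicator_of_notMem hs, Set.indicator_of_notMem]
        intro hmem
        exact hs ⟨hmem.2.1, hmem.2.2⟩
    · rw [if_neg hr, Pi.zero_apply, Set.indicator_of_notMem]
      intro hmem
      exact hr ⟨hmem.1, lt_trans hmem.2.1 hmem.2.2⟩
  -- slice in s (first coordinate fixed)
  have slice_s : ∀ s : ℝ, (fun r => F (s, r)) =
      if s ∈ Set.Ioo 0 t then
        (Set.Ioo 0 s).indicator
          (fun r => (t - s) ^ (α - 1) * ((s - r) ^ (-α) * deriv y r))
      else 0 := by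
    intro s; funext r
    rw [hF]
    by_cases hs : s ∈ Set.Ioo 0 t
    · rw [if_pos hs]
      by_cases hr : r ∈ Set.Ioo 0 s
      · rw [Set.indicator_of_mem hr,
          Set.indicator_of_mem (show (s, r) ∈ S from ⟨hr.1, hr.2, hs.2⟩)]
      · rw [Set.indicator_of_notMem hr, Set.indicator_of_notMem]
        intro hmem
        exact hr ⟨hmem.1, hmem.2.1⟩
    · rw [if_neg hs, Pi.zero_apply, Set.indicator_of_notMem]
      intro hmem
      exact hs ⟨lt_trans hmem.1 hmem.2.1, hmem.2.2⟩
  -- integrability of F on the product space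
  have hdy_int : IntegrableOn (deriv y) (Set.Ioo 0 t) :=
    (hAC.2.1).mono_set (Set.Ioo_subset_Ioo le_rfl htT)
  have hF_int : Integrable F ((volume : Measure ℝ).prod (volume : Measure ℝ)) := by
    refine (integrable_prod_iff' hFmeas.aestronglyMeasurable).mpr ⟨?_, ?_⟩
    · refine Filter.Eventually.of_forall (fun r => ?_)
      rw [slice_r r]
      by_cases hr : r ∈ Set.Ioo 0 t
      · rw [if_pos hr, integrable_indicator_iff measurableSet_Ioo]
        exact (kernel_integrableOn hα0 hα1 hr.2).mul_const _
      · rw [if_neg hr]; exact integrable_zero _ _ _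
    · have heq : (fun r => ∫ s, ‖F (s, r)‖) = (Set.Ioo 0 t).indicator
          (fun r => (Real.Gamma α * Real.Gamma (1 - α)) * |deriv y r|) := by
        funext r
        by_cases hr : r ∈ Set.Ioo 0 t
        · rw [Set.indicator_of_mem hr]
          have hnorm : (fun s => ‖F (s, r)‖) = (Set.Ioo r t).indicator
              (fun s => ((t - s) ^ (α - 1) * (s - r) ^ (-α)) * |deriv y r|) := by
            funext s
            rw [show F (s, r) = _ from congrFun (slice_r r) s, if_pos hr]
            by_cases hs : s ∈ Set.Ioo r t
            · rw [Set.indicator_of_mem hs, Set.indicator_of_mem hs, Real.norm_eq_abs,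
                abs_mul, abs_of_nonneg (mul_nonneg (Real.rpow_nonneg (by linarith [hs.2]) _)
                  (Real.rpow_nonneg (by linarith [hs.1]) _))]
            · rw [Set.indicator_of_notMem hs, Set.indicator_of_notMem hs, norm_zero]
          rw [hnorm, integral_indicator measurableSet_Ioo, integral_mul_const,
            kernel_integral hα0 hα1 hr.2]
        · rw [Set.indicator_of_notMem hr]
          have : (fun s => ‖F (s, r)‖) = fun _ => (0:ℝ) := by
            funext s
            rw [show F (s, r) = _ from congrFun (slice_r r) s, if_neg hr, Pi.zero_apply,
              norm_zero]
          rw [this, integral_zero]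
      rw [heq, integrable_indicator_iff measurableSet_Ioo]
      exact (hdy_int.norm.const_mul _)
  -- the two iterated integrals
  have swap : (∫ s : ℝ, ∫ r : ℝ, F (s, r)) = ∫ r : ℝ, ∫ s : ℝ, F (s, r) :=
    integral_integral_swap hF_int
  -- evaluate inner integral in r
  have inner_s : ∀ s : ℝ, (∫ r : ℝ, F (s, r)) = (Set.Ioo 0 t).indicator
      (fun s => (t - s) ^ (α - 1) * (Real.Gamma (1 - α) * caputoDeriv α y s)) s := by
    intro s
    rw [slice_s s]
    by_cases hs : s ∈ Set.Ioo 0 t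
    · rw [if_pos hs, Set.indicator_of_mem hs, integral_indicator measurableSet_Ioo,
        integral_const_mul]
      congr 1
      rw [caputoDeriv, ← mul_assoc, mul_one_div, div_self hΓ1α.ne', one_mul]
    · rw [if_neg hs, Set.indicator_of_notMem hs]
      simp
  -- evaluate inner integral in s
  have inner_r : ∀ r : ℝ, (∫ s : ℝ, F (s, r)) = (Set.Ioo 0 t).indicator
      (fun r => (Real.Gamma α * Real.Gamma (1 - α)) * deriv y r) r := by
    intro r
    rw [slice_r r]
    by_cases hr : r ∈ Set.Ioo 0 t
    · rw [if_pos hr, Set.indicator_of_mem hr, integral_indicator measurableSet_Ioo,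
        integral_mul_const, kernel_integral hα0 hα1 hr.2]
    · rw [if_neg hr, Set.indicator_of_notMem hr]
      simp
  -- compute both sides
  have lhs_eq : (∫ s : ℝ, ∫ r : ℝ, F (s, r))
      = ∫ s in Set.Ioo 0 t, (t - s) ^ (α - 1) * (Real.Gamma (1 - α) * caputoDeriv α y s) := by
    simp_rw [inner_s]
    exact integral_indicator measurableSet_Ioo
  have hyt : y t = y 0 + ∫ s in Set.Ioo 0 t, deriv y s := hAC.2.2 t ⟨ht0.le, htT⟩
  have rhs_eq : (∫ r : ℝ, ∫ s : ℝ, F (s, r))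
      = Real.Gamma α * Real.Gamma (1 - α) * (y t - y 0) := by
    simp_rw [inner_r]
    rw [integral_indicator measurableSet_Ioo, integral_const_mul]
    rw [show (∫ s in Set.Ioo 0 t, deriv y s) = y t - y 0 by rw [hyt]; ring]
  have key : (∫ s in Set.Ioo 0 t, (t - s) ^ (α - 1) * (Real.Gamma (1 - α) * caputoDeriv α y s))
      = Real.Gamma α * Real.Gamma (1 - α) * (y t - y 0) := by
    rw [← lhs_eq, swap, rhs_eq]
  constructor
  · have e1 : (fun s => (t - s) ^ (α - 1) * (Real.Gamma (1 - α) * caputoDeriv α y s))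
        = fun s => Real.Gamma (1 - α) * ((t - s) ^ (α - 1) * caputoDeriv α y s) := by
      funext s; ring
    rw [e1, integral_const_mul] at key
    have := mul_left_cancel₀ hΓ1α.ne'
      (key.trans (by ring : Real.Gamma α * Real.Gamma (1 - α) * (y t - y 0)
        = Real.Gamma (1 - α) * (Real.Gamma α * (y t - y 0))))
    exact this
  · have hint : Integrable (fun s : ℝ => ∫ r : ℝ, F (s, r)) volume := by
      have := hF_int.integral_prod_left
      exact this
    rw [show (fun s : ℝ => ∫ r : ℝ, F (s, r)) = (Set.Ioo 0 t).indicator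
        (fun s => (t - s) ^ (α - 1) * (Real.Gamma (1 - α) * caputoDeriv α y s))
      from funext inner_s, integrable_indicator_iff measurableSet_Ioo] at hint
    have h2 := (hint.const_mul (1 / Real.Gamma (1 - α)))
    refine h2.congr (Filter.Eventually.of_forall (fun s => ?_))
    field_simp

theorem stmt7 (α T b c₁ : ℝ) (hα0 : 0 < α) (hα1 : α < 1) (hT : 0 < T)
    (hb : 0 < b) (hc : 0 < c₁) (y : ℝ → ℝ)
    (hnn : ∀ t ∈ Set.Icc 0 T, 0 ≤ y t)
    (hAC : AbsContOn y 0 T)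
    (hineq : ∀ᵐ t ∂(volume.restrict (Set.Icc 0 T)),
      caputoDeriv α y t + c₁ * y t ≤ b) :
    ∀ t ∈ Set.Icc 0 T, y t ≤ y 0 + b * T ^ α / (α * Real.Gamma α) := by
  have hΓα : 0 < Real.Gamma α := Real.Gamma_pos_of_pos hα0
  have hTα : 0 < T ^ α := Real.rpow_pos_of_pos hT _
  intro t ht
  rcases eq_or_lt_of_le ht.1 with h0 | h0
  · rw [← h0]
    have : 0 < b * T ^ α / (α * Real.Gamma α) := by positivity
    linarith
  · obtain ⟨hkey, hint⟩ := caputo_fund hα0 hα1 hT y hAC h0 ht.2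
    -- a.e. pointwise bound
    have hae : ∀ᵐ s ∂(volume.restrict (Set.Ioo 0 t)),
        (t - s) ^ (α - 1) * caputoDeriv α y s ≤ (t - s) ^ (α - 1) * b := by
      have hsub : Set.Ioo 0 t ⊆ Set.Icc 0 T :=
        fun s hs => ⟨hs.1.le, le_trans hs.2.le ht.2⟩
      have h1 := ae_restrict_of_ae_restrict_of_subset hsub hineq
      filter_upwards [h1, ae_restrict_mem measurableSet_Ioo] with s hs hmem
      have hy := hnn s ⟨hmem.1.le, le_trans hmem.2.le ht.2⟩
      have hcb : caputoDeriv α y s ≤ b := by nlinarith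
      exact mul_le_mul_of_nonneg_left hcb (Real.rpow_nonneg (by linarith [hmem.2]) _)
    -- integrability of the majorant
    have hint2 : IntegrableOn (fun s => (t - s) ^ (α - 1) * b) (Set.Ioo 0 t) := by
      have h1 : IntervalIntegrable (fun x : ℝ => x ^ (α - 1)) volume 0 t :=
        intervalIntegral.intervalIntegrable_rpow' (by linarith)
      have h2 := (h1.comp_sub_left t).symm
      rw [sub_zero, sub_self, intervalIntegrable_iff, uIoc_of_le h0.le] at h2
      exact ((h2.mono_set Set.Ioo_subset_Ioc_self).mul_const b)
    have hmono := integral_mono_ae hint.integrable hint2.integrable hae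
    -- value of the majorant integral
    have hval : (∫ s in Set.Ioo 0 t, (t - s) ^ (α - 1) * b) = t ^ α / α * b := by
      rw [integral_mul_const]
      congr 1
      rw [← integral_Ioc_eq_integral_Ioo, ← intervalIntegral.integral_of_le h0.le,
        intervalIntegral.integral_comp_sub_left (fun x : ℝ => x ^ (α - 1)) t,
        sub_zero, sub_self, integral_rpow (Or.inl (by linarith))]
      rw [sub_add_cancel, Real.zero_rpow hα0.ne', sub_zero]
    rw [hkey, hval] at hmono
    have htT : t ^ α ≤ T ^ α := Real.rpow_le_rpow h0.le ht.2 hα0.le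
    have h3 : Real.Gamma α * (y t - y 0) ≤ T ^ α / α * b := by
      refine hmono.trans ?_
      have h5 : t ^ α / α ≤ T ^ α / α := by gcongr
      exact mul_le_mul_of_nonneg_right h5 hb.le
    have h3' : Real.Gamma α * (y t - y 0) * α ≤ T ^ α * b := by
      have h6 := mul_le_mul_of_nonneg_right h3 hα0.le
      rw [div_mul_eq_mul_div, div_mul_eq_mul_div, mul_div_assoc,
        div_self hα0.ne', mul_one] at h6
      exact h6
    have h4 : y t - y 0 ≤ b * T ^ α / (α * Real.Gamma α) := by
      rw [le_div_iff₀ (by positivity)]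
      nlinarith [h3']
    linarith
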